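/- The six gamma matrices satisfy the Clifford algebra anticommutation relations of signature (4,2): for all indices m, n in {x, y, z, t, q, p}, Γ_m Γ_n + Γ_n Γ_m = 2 g(m,n) · I₄. -/

import Mathlib

open Quaternion Matrix

/-- The split quaternions, with K = i, L = j, KL = k. -/
notation "ℍ'" => QuaternionAlgebra ℝ (-1) 0 1

/-- A = ℍ' ⊗_ℝ ℂ, realized as the quaternion algebra over ℂ with i² = −1, j² = 1. -/
abbrev SplitQC := QuaternionAlgebra ℂ (-1) 0 1

namespace SplitQC
/-- K, the split-quaternion unit with K² = −1 -/
def K : SplitQC := ⟨0, 1, 0, 0⟩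
/-- L, the split-quaternion unit with L² = 1 -/
def L : SplitQC := ⟨0, 0, 1, 0⟩
/-- KL, with (KL)² = 1 -/
def KL : SplitQC := ⟨0, 0, 0, 1⟩
/-- ℓ = 1 ⊗ i, the complex unit -/
def ll : SplitQC := ⟨Complex.I, 0, 0, 0⟩
end SplitQC

open SplitQC

/-- Index set {x, y, z, t, q, p} for the gamma matrices. -/
inductive Idx | x | y | z | t | q | p
deriving DecidableEq

/-- The gamma matrices generating Cl(4,2). -/
def Γ : Idx → Matrix (Fin 4) (Fin 4) SplitQC
| Idx.x => !![0,0,0,1; 0,0,1,0; 0,1,0,0; 1,0,0,0]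
| Idx.y => !![0,0,0,-ll; 0,0,ll,0; 0,-ll,0,0; ll,0,0,0]
| Idx.z => !![0,0,1,0; 0,0,0,-1; 1,0,0,0; 0,-1,0,0]
| Idx.t => !![0,0,L,0; 0,0,0,L; -L,0,0,0; 0,-L,0,0]
| Idx.q => !![0,0,K,0; 0,0,0,K; -K,0,0,0; 0,-K,0,0]
| Idx.p => !![0,0,KL,0; 0,0,0,KL; -KL,0,0,0; 0,-KL,0,0]

/-- The metric of signature (4,2). -/
def g : Idx → Idx → ℝ
| Idx.x, Idx.x => 1 | Idx.y, Idx.y => 1 | Idx.z, Idx.z => 1 | Idx.q, Idx.q => 1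
| Idx.t, Idx.t => -1 | Idx.p, Idx.p => -1
| _, _ => 0

theorem mul_fin_four {α} [NonUnitalNonAssocSemiring α]
    (a₁₁ a₁₂ a₁₃ a₁₄ a₂₁ a₂₂ a₂₃ a₂₄ a₃₁ a₃₂ a₃₃ a₃₄ a₄₁ a₄₂ a₄₃ a₄₄
     b₁₁ b₁₂ b₁₃ b₁₄ b₂₁ b₂₂ b₂₃ b₂₄ b₃₁ b₃₂ b₃₃ b₃₄ b₄₁ b₄₂ b₄₃ b₄₄ : α) :
    !![a₁₁,a₁₂,a₁₃,a₁₄; a₂₁,a₂₂,a₂₃,a₂₄; a₃₁,a₃₂,a₃₃,a₃₄; a₄₁,a₄₂,a₄₃,a₄₄] *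
    !![b₁₁,b₁₂,b₁₃,b₁₄; b₂₁,b₂₂,b₂₃,b₂₄; b₃₁,b₃₂,b₃₃,b₃₄; b₄₁,b₄₂,b₄₃,b₄₄] =
    !![a₁₁*b₁₁+a₁₂*b₂₁+a₁₃*b₃₁+a₁₄*b₄₁, a₁₁*b₁₂+a₁₂*b₂₂+a₁₃*b₃₂+a₁₄*b₄₂,
       a₁₁*b₁₃+a₁₂*b₂₃+a₁₃*b₃₃+a₁₄*b₄₃, a₁₁*b₁₄+a₁₂*b₂₄+a₁₃*b₃₄+a₁₄*b₄₄;
       a₂₁*b₁₁+a₂₂*b₂₁+a₂₃*b₃₁+a₂₄*b₄₁, a₂₁*b₁₂+a₂₂*b₂₂+a₂₃*b₃₂+a₂₄*b₄₂,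
       a₂₁*b₁₃+a₂₂*b₂₃+a₂₃*b₃₃+a₂₄*b₄₃, a₂₁*b₁₄+a₂₂*b₂₄+a₂₃*b₃₄+a₂₄*b₄₄;
       a₃₁*b₁₁+a₃₂*b₂₁+a₃₃*b₃₁+a₃₄*b₄₁, a₃₁*b₁₂+a₃₂*b₂₂+a₃₃*b₃₂+a₃₄*b₄₂,
       a₃₁*b₁₃+a₃₂*b₂₃+a₃₃*b₃₃+a₃₄*b₄₃, a₃₁*b₁₄+a₃₂*b₂₄+a₃₃*b₃₄+a₃₄*b₄₄;
       a₄₁*b₁₁+a₄₂*b₂₁+a₄₃*b₃₁+a₄₄*b₄₁, a₄₁*b₁₂+a₄₂*b₂₂+a₄₃*b₃₂+a₄₄*b₄₂,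
       a₄₁*b₁₃+a₄₂*b₂₃+a₄₃*b₃₃+a₄₄*b₄₃, a₄₁*b₁₄+a₄₂*b₂₄+a₄₃*b₃₄+a₄₄*b₄₄] := by
  ext i j
  fin_cases i <;> fin_cases j <;> simp [Matrix.mul_apply, Fin.sum_univ_four]

namespace SplitQC
@[simp] lemma K_mul_K : K * K = -1 := by ext <;> simp [K]
@[simp] lemma L_mul_L : L * L = 1 := by ext <;> simp [L]
@[simp] lemma KL_mul_KL : KL * KL = 1 := by ext <;> simp [KL]
@[simp] lemma ll_mul_ll : ll * ll = -1 := by ext <;> simp [ll, Complex.ext_iff]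
@[simp] lemma K_mul_L : K * L = KL := by ext <;> simp [K, L, KL]
@[simp] lemma L_mul_K : L * K = -KL := by ext <;> simp [K, L, KL]
@[simp] lemma K_mul_KL : K * KL = -L := by ext <;> simp [K, L, KL]
@[simp] lemma KL_mul_K : KL * K = L := by ext <;> simp [K, L, KL]
@[simp] lemma L_mul_KL : L * KL = -K := by ext <;> simp [K, L, KL]
@[simp] lemma KL_mul_L : KL * L = K := by ext <;> simp [K, L, KL]
@[simp] lemma ll_mul_K : ll * K = K * ll := by ext <;> simp [ll, K]
@[simp] lemma ll_mul_L : ll * L = L * ll := by ext <;> simp [ll, L]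
@[simp] lemma ll_mul_KL : ll * KL = KL * ll := by ext <;> simp [ll, KL]
end SplitQC


namespace SplitQC
@[simp] lemma re_two : (2:SplitQC).re = 2 := rfl
@[simp] lemma imI_two : (2:SplitQC).imI = 0 := rfl
@[simp] lemma imJ_two : (2:SplitQC).imJ = 0 := rfl
@[simp] lemma imK_two : (2:SplitQC).imK = 0 := rfl
end SplitQC

lemma fin_two_smul : !![2,0,0,0;0,2,0,0;0,0,2,0;0,0,0,2] = (2:ℝ) • (1 : Matrix (Fin 4) (Fin 4) SplitQC) := by
  rw [← Matrix.ext_iff]; intro i j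
  fin_cases i <;> fin_cases j <;>
    simp [Matrix.one_apply, QuaternionAlgebra.ext_iff, Matrix.vecHead, Matrix.vecTail]
lemma fin_zero : !![0,0,0,0;0,0,0,0;0,0,0,0;0,0,0,0] = (0 : Matrix (Fin 4) (Fin 4) SplitQC) := by
  rw [← Matrix.ext_iff]; intro i j
  fin_cases i <;> fin_cases j <;> simp [Matrix.vecHead, Matrix.vecTail]
lemma fin_neg_two_smul : !![-2,0,0,0;0,-2,0,0;0,0,-2,0;0,0,0,-2] = -((2:ℝ) • (1 : Matrix (Fin 4) (Fin 4) SplitQC)) := by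
  rw [← Matrix.ext_iff]; intro i j
  fin_cases i <;> fin_cases j <;>
    simp [Matrix.one_apply, QuaternionAlgebra.ext_iff, Matrix.vecHead, Matrix.vecTail]

set_option maxHeartbeats 3200000 in
/-- The gamma matrices satisfy the Clifford relations of signature (4,2):
Γ_m Γ_n + Γ_n Γ_m = 2 g(m,n) I₄. -/
theorem gamma_clifford_relations (m n : Idx) :
    Γ m * Γ n + Γ n * Γ m = (2 * g m n) • (1 : Matrix (Fin 4) (Fin 4) SplitQC) := by
  cases m <;> cases n <;>
    · simp only [Γ, g, mul_fin_four]
      norm_num [fin_two_smul, fin_zero, fin_neg_two_smul]
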